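/- Let x₁, ..., x_n ∈ ℝ^d, w₁, ..., w_n ∈ ℝ^d, S ⊆ {1,...,n} with mean μ̂ of {x_i : i ∈ S}, and suppose: (a) ‖w_i − μ̂‖₂ ≤ ρ for all i ∈ S, and (b) for every unit vector v, Σ_{i=1}^n ⟨x_i − w_i, v⟩^{2t} ≤ K. Then for every subset S' ⊆ S with |S'| ≥ βn, the mean of {x_i : i ∈ S'} satisfies ‖(1/|S'|)Σ_{i∈S'}(x_i − μ̂)‖₂ ≤ ρ + (K/(βn))^{1/2t}. -/

import Mathlib

lemma aux_power_mean {n t : ℕ} (ht : 1 ≤ t) (S' : Finset (Fin n))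
    (a : Fin n → ℝ) (K c : ℝ) (hK : 0 ≤ K) (hc : 0 < c)
    (hcard : c ≤ (S'.card : ℝ))
    (hsum : ∑ i : Fin n, (a i) ^ (2 * t) ≤ K) :
    ((S'.card : ℝ))⁻¹ * ∑ i ∈ S', a i ≤ (K / c) ^ ((1 : ℝ) / (2 * t)) := by
  have hm : (0 : ℝ) < S'.card := lt_of_lt_of_le hc hcard
  set P : ℝ := ((S'.card : ℝ))⁻¹ * ∑ i ∈ S', |a i| with hP
  have hP0 : 0 ≤ P := by
    apply mul_nonneg (by positivity)
    exact Finset.sum_nonneg fun i _ => abs_nonneg _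
  have step1 : ((S'.card : ℝ))⁻¹ * ∑ i ∈ S', a i ≤ P := by
    apply mul_le_mul_of_nonneg_left _ (by positivity)
    exact Finset.sum_le_sum fun i _ => le_abs_self _
  have habs : ∀ i, |a i| ^ (2 * t) = a i ^ (2 * t) := by
    intro i
    rw [pow_abs, abs_of_nonneg ((even_two_mul t).pow_nonneg _)]
  have hsum2 : ∑ i ∈ S', |a i| ^ (2 * t) ≤ K := by
    refine le_trans ?_ hsum
    calc ∑ i ∈ S', |a i| ^ (2 * t) = ∑ i ∈ S', a i ^ (2 * t) :=
          Finset.sum_congr rfl fun i _ => habs i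
      _ ≤ ∑ i : Fin n, a i ^ (2 * t) := by
          apply Finset.sum_le_sum_of_subset_of_nonneg (Finset.subset_univ S')
          intro i _ _
          exact (even_two_mul t).pow_nonneg _
  have step2 : P ^ (2 * t) ≤ K / c := by
    have h2t : 2 * t = (2 * t - 1) + 1 := by omega
    have hpm := pow_sum_div_card_le_sum_pow (s := S') (f := fun i => |a i|)
      (fun i _ => abs_nonneg _) (2 * t - 1)
    rw [← h2t] at hpm
    have hPpow : P ^ (2 * t) =
        ((∑ i ∈ S', |a i|) ^ (2 * t) / (S'.card : ℝ) ^ (2 * t - 1)) / (S'.card : ℝ) := by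
      rw [hP, mul_pow, inv_pow, inv_mul_eq_div, div_div, ← pow_succ, ← h2t]
    rw [hPpow]
    calc ((∑ i ∈ S', |a i|) ^ (2 * t) / (S'.card : ℝ) ^ (2 * t - 1)) / (S'.card : ℝ)
        ≤ (∑ i ∈ S', |a i| ^ (2 * t)) / (S'.card : ℝ) := by exact div_le_div_of_nonneg_right hpm hm.le
      _ ≤ K / (S'.card : ℝ) := by exact div_le_div_of_nonneg_right hsum2 hm.le
      _ ≤ K / c := by gcongr
  refine step1.trans ?_
  have h2t0 : (0 : ℝ) < (2 * t : ℕ) := by positivity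
  have : P = (P ^ (2 * t)) ^ ((1 : ℝ) / (2 * t)) := by
    rw [← Real.rpow_natCast P (2 * t), ← Real.rpow_mul hP0]
    push_cast
    rw [mul_one_div, div_self (by positivity), Real.rpow_one]
  rw [this]
  apply Real.rpow_le_rpow (pow_nonneg hP0 _) step2 (by positivity)

theorem stmt_15 {d n t : ℕ} (ht : 1 ≤ t) (hn : 0 < n)
    (x w : Fin n → EuclideanSpace ℝ (Fin d))
    (S : Finset (Fin n)) (hSne : S.Nonempty)
    (ρ K β : ℝ) (hρ : 0 ≤ ρ) (hK : 0 ≤ K) (hβ : 0 < β) (hβ1 : β ≤ 1)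
    (muhat : EuclideanSpace ℝ (Fin d))
    (hmu : muhat = (S.card : ℝ)⁻¹ • ∑ i ∈ S, x i)
    (ha : ∀ i ∈ S, ‖w i - muhat‖ ≤ ρ)
    (hb : ∀ v : EuclideanSpace ℝ (Fin d), ‖v‖ = 1 →
      ∑ i : Fin n, (inner ℝ (x i - w i) v : ℝ) ^ (2 * t) ≤ K) :
    ∀ S' ⊆ S, β * n ≤ (S'.card : ℝ) →
      ‖(S'.card : ℝ)⁻¹ • ∑ i ∈ S', (x i - muhat)‖
        ≤ ρ + (K / (β * n)) ^ ((1 : ℝ) / (2 * t)) := by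
  intro S' hsub hcard
  have hβn : (0 : ℝ) < β * n := by positivity
  have hm : (0 : ℝ) < S'.card := lt_of_lt_of_le hβn hcard
  set m : ℝ := (S'.card : ℝ)
  set R : ℝ := (K / (β * n)) ^ ((1 : ℝ) / (2 * t)) with hR
  have hR0 : 0 ≤ R := Real.rpow_nonneg (by positivity) _
  set u : EuclideanSpace ℝ (Fin d) := m⁻¹ • ∑ i ∈ S', (x i - w i) with hu
  have hsplit : m⁻¹ • ∑ i ∈ S', (x i - muhat)
      = u + m⁻¹ • ∑ i ∈ S', (w i - muhat) := by
    rw [hu, ← smul_add, ← Finset.sum_add_distrib]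
    congr 1
    apply Finset.sum_congr rfl
    intros; abel
  have hB : ‖m⁻¹ • ∑ i ∈ S', (w i - muhat)‖ ≤ ρ := by
    rw [norm_smul]
    have : ‖∑ i ∈ S', (w i - muhat)‖ ≤ m * ρ := by
      refine (norm_sum_le _ _).trans ?_
      calc ∑ i ∈ S', ‖w i - muhat‖ ≤ ∑ i ∈ S', ρ :=
            Finset.sum_le_sum fun i hi => ha i (hsub hi)
        _ = m * ρ := by rw [Finset.sum_const, nsmul_eq_mul]
    calc ‖m⁻¹‖ * ‖∑ i ∈ S', (w i - muhat)‖ ≤ ‖m⁻¹‖ * (m * ρ) := by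
          apply mul_le_mul_of_nonneg_left this (norm_nonneg _)
      _ = ρ := by
          rw [Real.norm_eq_abs, abs_of_nonneg (by positivity)]
          field_simp
  have hA : ‖u‖ ≤ R := by
    rcases eq_or_ne u 0 with h0 | h0
    · rw [h0, norm_zero]; exact hR0
    · set v : EuclideanSpace ℝ (Fin d) := ‖u‖⁻¹ • u with hv
      have hun : (0 : ℝ) < ‖u‖ := norm_pos_iff.mpr h0
      have hv1 : ‖v‖ = 1 := by
        rw [hv, norm_smul, Real.norm_eq_abs, abs_of_nonneg (by positivity),
          inv_mul_cancel₀ hun.ne']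
      have hinner : (inner ℝ u v : ℝ) = ‖u‖ := by
        rw [hv, real_inner_smul_right, real_inner_self_eq_norm_sq]
        rw [sq]
        field_simp
      have hexp : (inner ℝ u v : ℝ) = m⁻¹ * ∑ i ∈ S', (inner ℝ (x i - w i) v : ℝ) := by
        rw [hu, real_inner_smul_left, sum_inner]
      have := aux_power_mean ht S' (fun i => (inner ℝ (x i - w i) v : ℝ)) K (β * n)
        hK hβn hcard (hb v hv1)
      rw [← hinner, hexp]
      exact this
  rw [hsplit]
  calc ‖u + m⁻¹ • ∑ i ∈ S', (w i - muhat)‖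
      ≤ ‖u‖ + ‖m⁻¹ • ∑ i ∈ S', (w i - muhat)‖ := norm_add_le _ _
    _ ≤ R + ρ := add_le_add hA hB
    _ = ρ + R := add_comm _ _
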